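/- Let m be even. A symmetric tensor A of order m and dimension n is strictly copositive if and only if there exists a real number γ ≥ 0 such that A x^m + γ ‖x⁺‖^m > 0 for all x ∈ ℝ^n \ {0}, where x⁺ is the componentwise positive part of x. -/

import Mathlib

open Finset

/-- `A x^m` for an `m`-order `n`-dimensional tensor `A`. -/
noncomputable def tpow {m n : ℕ} (A : (Fin m → Fin n) → ℝ) (x : Fin n → ℝ) : ℝ :=
  ∑ f : Fin m → Fin n, A f * ∏ k, x (f k)

/-- `A` is symmetric: entries invariant under permutations of indices. -/
def SymT {m n : ℕ} (A : (Fin m → Fin n) → ℝ) : Prop :=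
  ∀ (σ : Equiv.Perm (Fin m)) (f : Fin m → Fin n), A (f ∘ σ) = A f

/-- `A` is copositive. -/
def CoposT {m n : ℕ} (A : (Fin m → Fin n) → ℝ) : Prop :=
  ∀ x : Fin n → ℝ, (∀ i, 0 ≤ x i) → 0 ≤ tpow A x

/-- `A` is strictly copositive. -/
def StrictCoposT {m n : ℕ} (A : (Fin m → Fin n) → ℝ) : Prop :=
  ∀ x : Fin n → ℝ, (∀ i, 0 ≤ x i) → x ≠ 0 → 0 < tpow A x

lemma tpow_smul {m n : ℕ} (A : (Fin m → Fin n) → ℝ) (c : ℝ) (x : Fin n → ℝ) :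
    tpow A (c • x) = c ^ m * tpow A x := by
  unfold tpow
  rw [Finset.mul_sum]
  refine Finset.sum_congr rfl fun f _ => ?_
  have : (∏ k, (c • x) (f k)) = c ^ m * ∏ k, x (f k) := by
    simp only [Pi.smul_apply, smul_eq_mul]
    rw [Finset.prod_mul_distrib, Finset.prod_const, Finset.card_univ, Fintype.card_fin]
  rw [this]; ring

lemma tpow_neg {m n : ℕ} (hme : Even m) (A : (Fin m → Fin n) → ℝ) (x : Fin n → ℝ) :
    tpow A (-x) = tpow A x := by
  have : -x = (-1 : ℝ) • x := by simp
  rw [this, tpow_smul, hme.neg_one_pow, one_mul]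

lemma cont_tpow {m n : ℕ} (A : (Fin m → Fin n) → ℝ) : Continuous (tpow A) := by
  refine continuous_finset_sum _ fun f _ => continuous_const.mul ?_
  exact continuous_finset_prod _ fun k _ => continuous_apply (f k)

lemma pospart_smul {n : ℕ} (c : ℝ) (hc : 0 ≤ c) (x : Fin n → ℝ) :
    (fun i => max ((c • x) i) 0 : Fin n → ℝ) = c • (fun i => max (x i) 0) := by
  funext i
  simp only [Pi.smul_apply, smul_eq_mul]
  rw [mul_max_of_nonneg _ _ hc, mul_zero]

theorem stmt4 {m n : ℕ} (hm : 0 < m) (hme : Even m) (A : (Fin m → Fin n) → ℝ)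
    (hA : SymT A) :
    StrictCoposT A ↔
      ∃ γ : ℝ, 0 ≤ γ ∧ ∀ x : Fin n → ℝ, x ≠ 0 →
        0 < tpow A x + γ * ‖(fun i => max (x i) 0 : Fin n → ℝ)‖ ^ m := by
  set g : (Fin n → ℝ) → ℝ := fun x => ‖(fun i => max (x i) 0 : Fin n → ℝ)‖ ^ m with hg
  have hgnn : ∀ x, 0 ≤ g x := fun x => pow_nonneg (norm_nonneg _) m
  have hgsmul : ∀ (c : ℝ), 0 ≤ c → ∀ x, g (c • x) = c ^ m * g x := by
    intro c hc x
    simp only [hg]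
    rw [pospart_smul c hc, norm_smul, Real.norm_eq_abs, abs_of_nonneg hc, mul_pow]
  have hgcont : Continuous g := by
    refine Continuous.pow ?_ m
    exact (continuous_pi fun i => (continuous_apply i).max continuous_const).norm
  constructor
  · intro hsc
    by_contra hc
    push_neg at hc
    choose X hX0 hXle using fun k : ℕ => hc k (Nat.cast_nonneg k)
    set u : ℕ → Fin n → ℝ := fun k => ‖X k‖⁻¹ • X k with hu
    have hnX : ∀ k, (0:ℝ) < ‖X k‖ := fun k => norm_pos_iff.mpr (hX0 k)
    have humem : ∀ k, u k ∈ Metric.sphere (0 : Fin n → ℝ) 1 := by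
      intro k
      rw [mem_sphere_zero_iff_norm, hu, norm_smul, Real.norm_eq_abs,
        abs_of_nonneg (inv_nonneg.mpr (hnX k).le), inv_mul_cancel₀ (hnX k).ne']
    have hule : ∀ k : ℕ, tpow A (u k) + (k : ℝ) * g (u k) ≤ 0 := by
      intro k
      have hcnn : (0:ℝ) ≤ ‖X k‖⁻¹ := inv_nonneg.mpr (hnX k).le
      rw [hu, tpow_smul, hgsmul _ hcnn]
      have : (‖X k‖⁻¹) ^ m * tpow A (X k) + (k:ℝ) * ((‖X k‖⁻¹) ^ m * g (X k))
          = (‖X k‖⁻¹) ^ m * (tpow A (X k) + (k:ℝ) * g (X k)) := by ring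
      rw [this]
      exact mul_nonpos_of_nonneg_of_nonpos (pow_nonneg hcnn m) (hXle k)
    obtain ⟨a, hamem, φ, hφmono, hconv⟩ :=
      (isCompact_sphere (0 : Fin n → ℝ) 1).tendsto_subseq humem
    have hfc : Filter.Tendsto (fun k => tpow A (u (φ k))) Filter.atTop (nhds (tpow A a)) :=
      ((cont_tpow A).tendsto a).comp hconv
    have hgc : Filter.Tendsto (fun k => g (u (φ k))) Filter.atTop (nhds (g a)) :=
      (hgcont.tendsto a).comp hconv
    have hga : g a = 0 := by
      by_contra hga0
      have hgapos : 0 < g a := lt_of_le_of_ne (hgnn a) (Ne.symm hga0)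
      have hφat : Filter.Tendsto (fun k => ((φ k : ℕ) : ℝ)) Filter.atTop Filter.atTop :=
        tendsto_natCast_atTop_atTop.comp hφmono.tendsto_atTop
      have h1 : Filter.Tendsto (fun k => ((φ k : ℕ) : ℝ) * g (u (φ k))) Filter.atTop
          Filter.atTop := hφat.atTop_mul_pos hgapos hgc
      have h2 : ∀ k, ((φ k : ℕ) : ℝ) * g (u (φ k)) ≤ -tpow A (u (φ k)) := by
        intro k; linarith [hule (φ k)]
      have h3 : Filter.Tendsto (fun k => -tpow A (u (φ k))) Filter.atTop Filter.atTop :=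
        Filter.tendsto_atTop_mono h2 h1
      exact not_tendsto_atTop_of_tendsto_nhds hfc.neg h3
    have hale : ∀ i, a i ≤ 0 := by
      intro i
      have h0 : ‖(fun i => max (a i) 0 : Fin n → ℝ)‖ = 0 := by
        have := hga
        simp only [hg] at this
        exact pow_eq_zero_iff hm.ne' |>.mp this
      have h1 : (fun i => max (a i) 0 : Fin n → ℝ) = 0 := norm_eq_zero.mp h0
      have h2 : max (a i) 0 = 0 := congrFun h1 i
      calc a i ≤ max (a i) 0 := le_max_left _ _
        _ = 0 := h2
    have hane : a ≠ 0 := by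
      rw [mem_sphere_zero_iff_norm] at hamem
      intro h; rw [h] at hamem; simp at hamem
    have hpos : 0 < tpow A a := by
      have := hsc (-a) (fun i => neg_nonneg.mpr (hale i)) (neg_ne_zero.mpr hane)
      rwa [tpow_neg hme] at this
    have hle : tpow A a ≤ 0 := by
      refine le_of_tendsto hfc (Filter.Eventually.of_forall fun k => ?_)
      have := hule (φ k)
      nlinarith [hgnn (u (φ k)), Nat.cast_nonneg (φ k) (α := ℝ)]
    linarith
  · rintro ⟨γ, hγ, h⟩ x hx hx0
    have h0 : (fun i => max ((-x) i) 0 : Fin n → ℝ) = 0 := by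
      funext i
      simp only [Pi.neg_apply, Pi.zero_apply]
      exact max_eq_right (neg_nonpos.mpr (hx i))
    have := h (-x) (neg_ne_zero.mpr hx0)
    rw [h0, norm_zero, zero_pow hm.ne', mul_zero, add_zero, tpow_neg hme] at this
    exact this
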